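/- Let t, k be positive integers, let A and B be positive rational numbers with t + k ≥ 4A + 2B, and let s ≥ t + k + 1 be an integer. Set d := (t^2 + t + k^2 + k)/2. If (s-1)·d + I_{t,k}(s) ≥ A·s^2 + B·s, then (s+1)·d + I_{t,k}(s+2) ≥ A·(s+2)^2 + B·(s+2). -/
import Mathlib


/-- `I t k s` is the rational number `I_{t,k}(s)` of the paper. -/
def Itk (t k s : ℤ) : ℚ :=
  ((s - t - k + 1 : ℤ) : ℚ) / 6 *
    (((s - t - k + 3) * (s - t - k + 2) + 3 * (t + k) * (s - t - k + 2) + 6 * k * t : ℤ) : ℚ)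

theorem stmt6 (t k : ℤ) (ht : 0 < t) (hk : 0 < k) (A B : ℚ) (hA : 0 < A) (hB : 0 < B)
    (htk : ((t + k : ℤ) : ℚ) ≥ 4 * A + 2 * B) (s : ℤ) (hs : s ≥ t + k + 1)
    (d : ℚ) (hd : d = ((t ^ 2 + t + k ^ 2 + k : ℤ) : ℚ) / 2)
    (h : ((s - 1 : ℤ) : ℚ) * d + Itk t k s ≥ A * (s : ℚ) ^ 2 + B * s) :
    ((s + 1 : ℤ) : ℚ) * d + Itk t k (s + 2) ≥ A * ((s : ℚ) + 2) ^ 2 + B * ((s : ℚ) + 2) := by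
  have key : Itk t k (s + 2) + 2 * d - Itk t k s = ((s : ℚ) + 3) ^ 2 := by
    simp only [Itk, hd]; push_cast; ring
  have hs' : ((s : ℚ)) ≥ ((t : ℚ) + k) + 1 := by exact_mod_cast hs
  have htk' : ((t : ℚ) + k) ≥ 4 * A + 2 * B := by exact_mod_cast htk
  have h1 : (4 : ℚ) * A + 2 * B ≤ (s : ℚ) - 1 := by linarith
  push_cast at h ⊢
  nlinarith [mul_pos hA hB, sq_nonneg ((s : ℚ) - 1), hA.le, hB.le,
    mul_nonneg hA.le (by linarith : (0:ℚ) ≤ (s:ℚ) - 1)]
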